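/- Let κ be a continuous and strictly concordance order preserving functional on d-dimensional copulas and let 𝒟 be a nonempty compact set of copulas. Then m(κ,𝒟) is nonempty and every element of m(κ,𝒟) is a minimal element of (𝒟,⪯); in particular, m(κ,𝒞), the set of minimizers of κ over all d-dimensional copulas, is a nonempty set consisting only of minimal copulas. -/
import Mathlib


open MeasureTheory unitInterval

/-- The unit cube `[0,1]^d`, modelled as functions `Fin d → [0,1]`. -/
abbrev Cube (d : ℕ) : Type := Fin d → unitInterval

/-- `η_K(u,v)`: the vector whose `k`-th coordinate is `v k` if `k ∈ K` and `u k` otherwise. -/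
def etaK {d : ℕ} (K : Finset (Fin d)) (u v : Cube d) : Cube d :=
  fun k => if k ∈ K then v k else u k

/-- `C` is a `d`-dimensional copula. -/
def IsCopula {d : ℕ} (C : Cube d → ℝ) : Prop :=
  (∀ u v : Cube d, u ≤ v →
      0 ≤ ∑ K : Finset (Fin d), (-1 : ℝ) ^ (d - K.card) * C (etaK K u v)) ∧
  (∀ k : Fin d, ∀ u : Cube d, C (etaK {k} u 0) = 0) ∧
  (∀ k : Fin d, ∀ u : Cube d, C (etaK {k} 1 u) = (u k : ℝ))

/-- The reflection `ν_K`, i.e. the composition of the commuting reflections `ν_k`, `k ∈ K`,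
written in closed (inclusion–exclusion) form: the coordinates in `L ⊆ K` are reflected to
`1 - u k`, the remaining coordinates of `K` are set to `1`. -/
noncomputable def nuK {d : ℕ} (K : Finset (Fin d)) (C : Cube d → ℝ) : Cube d → ℝ :=
  fun u => ∑ L ∈ K.powerset, (-1 : ℝ) ^ L.card *
    C (fun k => if k ∈ L then unitInterval.symm (u k) else if k ∈ K then 1 else u k)

/-- The total reflection `τ = ν_{{1,...,d}}`, sending a copula to its survival copula. -/
noncomputable def survival {d : ℕ} (C : Cube d → ℝ) : Cube d → ℝ := nuK Finset.univ C

/-- The concordance order `C ⪯ D`: `C(u) ≤ D(u)` and `(τ C)(u) ≤ (τ D)(u)` for all `u`. -/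
def ConcLE {d : ℕ} (C D : Cube d → ℝ) : Prop :=
  (∀ u, C u ≤ D u) ∧ (∀ u, survival C u ≤ survival D u)

/-- A minimal copula: a minimal element of the set of all copulas w.r.t. concordance order. -/
def IsMinimalCopula {d : ℕ} (C : Cube d → ℝ) : Prop :=
  IsCopula C ∧ ∀ D : Cube d → ℝ, IsCopula D → ConcLE D C → D = C

/-- `μ` is the copula measure `Q^C` of `C`: a Borel probability measure on the cube
with `μ [0,u] = C u` for all `u`. -/
def IsCopulaMeasure {d : ℕ} (C : Cube d → ℝ) (μ : Measure (Cube d)) : Prop :=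
  IsProbabilityMeasure μ ∧ ∀ u : Cube d, μ (Set.Icc 0 u) = ENNReal.ofReal (C u)

/-- `C` is `K`-countermonotonic: there are strictly increasing continuous functions
`g k : [0,1] → ℝ` (`k ∈ K`) and `c : ℝ` with `Q^C {u : ∑ k ∈ K, g k (u k) = c} = 1`. -/
def IsKCM {d : ℕ} (K : Finset (Fin d)) (C : Cube d → ℝ) : Prop :=
  ∃ (g : Fin d → unitInterval → ℝ) (c : ℝ),
    (∀ k ∈ K, StrictMono (g k) ∧ Continuous (g k)) ∧
    ∃ μ : Measure (Cube d), IsCopulaMeasure C μ ∧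
      μ {u : Cube d | ∑ k ∈ K, g k (u k) = c} = 1

/-- `C` is Kendall-countermonotonic (`τ`-CM):
`min (C u) ((τ C)(1 - u)) = 0` for every `u` with `0 < u < 1` coordinatewise. -/
noncomputable def IsTauCM {d : ℕ} (C : Cube d → ℝ) : Prop :=
  ∀ u : Cube d, (∀ k, 0 < u k ∧ u k < 1) →
    min (C u) (survival C (fun k => unitInterval.symm (u k))) = 0

/-- The upper Fréchet–Hoeffding bound `M(u) = min {u_1, ..., u_d}`. -/
noncomputable def Mcop {d : ℕ} : Cube d → ℝ :=
  fun u => sInf (Set.range fun k => (u k : ℝ))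

/-- `κ` is continuous: `κ (Cₙ) → κ C` whenever copulas `Cₙ` converge uniformly to a copula `C`. -/
def ContinuousFunctional {d : ℕ} (κ : (Cube d → ℝ) → ℝ) : Prop :=
  ∀ (Cs : ℕ → Cube d → ℝ) (C : Cube d → ℝ), (∀ n, IsCopula (Cs n)) → IsCopula C →
    TendstoUniformly Cs C Filter.atTop →
    Filter.Tendsto (fun n => κ (Cs n)) Filter.atTop (nhds (κ C))

/-- `κ` is concordance order preserving. -/
def ConcPreserving {d : ℕ} (κ : (Cube d → ℝ) → ℝ) : Prop :=
  ∀ C D : Cube d → ℝ, IsCopula C → IsCopula D → ConcLE C D → κ C ≤ κ D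

/-- `κ` is strictly concordance order preserving. -/
def StrictConcPreserving {d : ℕ} (κ : (Cube d → ℝ) → ℝ) : Prop :=
  ConcPreserving κ ∧
  ∀ C D : Cube d → ℝ, IsCopula C → IsCopula D → ConcLE C D → C ≠ D → κ C < κ D

/-- `m(κ,𝒟)`: the set of all `D ∈ 𝒟` with `κ D = inf_{C ∈ 𝒟} κ C`. -/
noncomputable def MinSet {d : ℕ} (κ : (Cube d → ℝ) → ℝ) (𝒟 : Set (Cube d → ℝ)) :
    Set (Cube d → ℝ) :=
  {D ∈ 𝒟 | κ D = sInf (κ '' 𝒟)}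

namespace CopulaAux
variable {d : ℕ} {C : Cube d → ℝ}
def pt (w : Cube d) (k j : Fin d) (x y : unitInterval) : Cube d :=
  fun i => if i = k then x else if i = j then y else w i

lemma zero_coord (h : IsCopula C) {p : Cube d} {k : Fin d} (hp : p k = 0) : C p = 0 := by
  have := h.2.1 k p
  have he : etaK {k} p 0 = p := by
    funext i
    simp only [etaK, Finset.mem_singleton]
    split <;> simp_all
  rwa [he] at this

lemma rect (h : IsCopula C) {k j : Fin d} (hkj : k ≠ j) (w : Cube d)
    {t s r r' : unitInterval} (hts : t ≤ s) (hrr : r ≤ r') :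
    C (pt w k j s r) + C (pt w k j t r') ≤ C (pt w k j t r) + C (pt w k j s r') := by
  classical
  set a : Cube d := fun i => if i = k then t else if i = j then r else 0 with ha
  set b : Cube d := fun i => if i = k then s else if i = j then r' else w i with hb
  have hab : a ≤ b := by
    intro i
    simp only [ha, hb]
    split
    · exact hts
    · split
      · exact hrr
      · exact (w i).2.1
  have hvol := h.1 a b hab
  set R : Finset (Fin d) := Finset.univ \ {k, j} with hR
  have hmemR : ∀ i, i ∈ R ↔ ¬(i = k ∨ i = j) := by
    intro i; simp [hR, not_or]
  have hkR : k ∉ R := by simp [hmemR]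
  have hjR : j ∉ R := by simp [hmemR]
  have hjkR : j ∉ insert k R := by
    simp only [Finset.mem_insert]
    rintro (h' | h')
    · exact hkj h'.symm
    · exact hjR h'
  have hkjR : k ∉ insert j R := by
    simp only [Finset.mem_insert]
    rintro (h' | h')
    · exact hkj h'
    · exact hkR h'
  have hzero : ∀ K : Finset (Fin d), ¬ R ⊆ K →
      (-1 : ℝ) ^ (d - K.card) * C (etaK K a b) = 0 := by
    intro K hK
    obtain ⟨i, hiR, hiK⟩ := Finset.not_subset.mp hK
    have hik := (hmemR i).mp hiR
    push_neg at hik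
    have hz : etaK K a b i = 0 := by
      simp [etaK, hiK, ha, hik.1, hik.2]
    rw [zero_coord h hz, mul_zero]
  have hsum : ∑ K ∈ Finset.univ.filter (fun K => R ⊆ K),
      (-1 : ℝ) ^ (d - K.card) * C (etaK K a b)
      = ∑ K : Finset (Fin d), (-1 : ℝ) ^ (d - K.card) * C (etaK K a b) :=
    Finset.sum_filter_of_ne (fun K _ hne => by_contra fun hc => hne (hzero K hc))
  have hfe : Finset.univ.filter (fun K => R ⊆ K)
      = {R, insert k R, insert j R, Finset.univ} := by
    ext K
    simp only [Finset.mem_filter, Finset.mem_univ, true_and, Finset.mem_insert,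
      Finset.mem_singleton]
    constructor
    · intro hRK
      by_cases hk : k ∈ K <;> by_cases hj : j ∈ K
      · right; right; right
        exact Finset.eq_univ_iff_forall.mpr fun i => by
          by_cases hik : i = k
          · exact hik ▸ hk
          · by_cases hij : i = j
            · exact hij ▸ hj
            · exact hRK ((hmemR i).mpr (by tauto))
      · right; left
        ext i
        simp only [Finset.mem_insert]
        constructor
        · intro hiK
          by_cases hik : i = k
          · exact Or.inl hik
          · by_cases hij : i = j
            · exact absurd (hij ▸ hiK) hj
            · exact Or.inr ((hmemR i).mpr (by tauto))
        · rintro (rfl | hiR)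
          · exact hk
          · exact hRK hiR
      · right; right; left
        ext i
        simp only [Finset.mem_insert]
        constructor
        · intro hiK
          by_cases hij : i = j
          · exact Or.inl hij
          · by_cases hik : i = k
            · exact absurd (hik ▸ hiK) hk
            · exact Or.inr ((hmemR i).mpr (by tauto))
        · rintro (rfl | hiR)
          · exact hj
          · exact hRK hiR
      · left
        apply Finset.Subset.antisymm _ hRK
        intro i hiK
        refine (hmemR i).mpr ?_
        rintro (rfl | rfl)
        · exact hk hiK
        · exact hj hiK
    · rintro (rfl | rfl | rfl | rfl)
      · exact Finset.Subset.refl _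
      · exact Finset.subset_insert _ _
      · exact Finset.subset_insert _ _
      · exact Finset.subset_univ _
  have hne1 : R ≠ insert k R := fun he => hkR (by rw [he]; exact Finset.mem_insert_self k R)
  have hne2 : R ≠ insert j R := fun he => hjR (by rw [he]; exact Finset.mem_insert_self j R)
  have hne3 : R ≠ Finset.univ := fun he => hkR (by rw [he]; exact Finset.mem_univ k)
  have hne4 : insert k R ≠ insert j R :=
    fun he => hjkR (by rw [he]; exact Finset.mem_insert_self j R)
  have hne5 : insert k R ≠ Finset.univ := fun he => hjkR (by rw [he]; exact Finset.mem_univ j)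
  have hne6 : insert j R ≠ Finset.univ := fun he => hkjR (by rw [he]; exact Finset.mem_univ k)
  have hn1 : R ∉ ({insert k R, insert j R, Finset.univ} : Finset (Finset (Fin d))) := by
    simp [hne1, hne2, hne3]
  have hn2 : insert k R ∉ ({insert j R, Finset.univ} : Finset (Finset (Fin d))) := by
    simp [hne4, hne5]
  have hn3 : (insert j R : Finset (Fin d)) ∉ ({Finset.univ} : Finset (Finset (Fin d))) := by
    simp [hne6]
  have hcard2 : ({k, j} : Finset (Fin d)).card = 2 := Finset.card_pair hkj
  have hdle : 2 ≤ d := by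
    rw [← hcard2]
    simpa using Finset.card_le_univ ({k, j} : Finset (Fin d))
  have hcardR : R.card = d - 2 := by
    rw [hR, Finset.card_sdiff_of_subset (Finset.subset_univ _), hcard2, Finset.card_univ, Fintype.card_fin]
  have hcardkR : (insert k R).card = d - 1 := by
    rw [Finset.card_insert_of_notMem hkR, hcardR]; omega
  have hcardjR : (insert j R).card = d - 1 := by
    rw [Finset.card_insert_of_notMem hjR, hcardR]; omega
  have e1 : etaK R a b = pt w k j t r := by
    funext i
    by_cases hik : i = k
    · subst hik; simp [etaK, pt, hkR, ha]
    · by_cases hij : i = j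
      · subst hij
        simp [etaK, pt, hjR, ha, Ne.symm hkj, hik]
      · have hiR : i ∈ R := (hmemR i).mpr (by tauto)
        simp [etaK, pt, hiR, hb, hik, hij]
  have e2 : etaK (insert k R) a b = pt w k j s r := by
    funext i
    by_cases hik : i = k
    · subst hik; simp [etaK, pt, hb]
    · by_cases hij : i = j
      · subst hij
        simp [etaK, pt, hjkR, ha, Ne.symm hkj, hik]
      · have hiR : i ∈ R := (hmemR i).mpr (by tauto)
        simp [etaK, pt, Finset.mem_insert_of_mem hiR, hb, hik, hij]
  have e3 : etaK (insert j R) a b = pt w k j t r' := by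
    funext i
    by_cases hik : i = k
    · subst hik; simp [etaK, pt, hkjR, ha]
    · by_cases hij : i = j
      · subst hij
        simp [etaK, pt, hb, Ne.symm hkj, hik]
      · have hiR : i ∈ R := (hmemR i).mpr (by tauto)
        simp [etaK, pt, Finset.mem_insert_of_mem hiR, hb, hik, hij]
  have e4 : etaK Finset.univ a b = pt w k j s r' := by
    funext i
    by_cases hik : i = k
    · subst hik; simp [etaK, pt, hb]
    · by_cases hij : i = j
      · subst hij; simp [etaK, pt, hb, Ne.symm hkj, hik]
      · simp [etaK, pt, hb, hik, hij]
  rw [← hsum, hfe, Finset.sum_insert hn1, Finset.sum_insert hn2, Finset.sum_insert hn3,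
    Finset.sum_singleton, e1, e2, e3, e4, hcardR, hcardkR, hcardjR, Finset.card_univ,
    Fintype.card_fin, show d - (d - 2) = 2 from by omega, show d - (d - 1) = 1 from by omega,
    Nat.sub_self] at hvol
  norm_num at hvol
  linarith

def pt1 (w : Cube d) (k : Fin d) (x : unitInterval) : Cube d :=
  fun i => if i = k then x else w i

lemma margin (h : IsCopula C) {p : Cube d} {k : Fin d} (hp : ∀ j, j ≠ k → p j = 1) :
    C p = (p k : ℝ) := by
  have := h.2.2 k p
  have he : etaK {k} 1 p = p := by
    funext i
    simp only [etaK, Finset.mem_singleton]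
    split
    · simp_all
    · exact ((hp i (by assumption)).symm : _)
  rwa [he] at this

lemma mono (hd : 2 ≤ d) (h : IsCopula C) (u : Cube d) (k : Fin d)
    {t s : unitInterval} (hts : t ≤ s) : C (pt1 u k t) ≤ C (pt1 u k s) := by
  haveI : Nontrivial (Fin d) := Fin.nontrivial_iff_two_le.mpr hd
  obtain ⟨j, hjk⟩ := exists_ne k
  have hkj : k ≠ j := Ne.symm hjk
  have key := rect h hkj u (hts := hts) (hrr := (unitInterval.nonneg' : (0:unitInterval) ≤ u j))
  have e1 : ∀ x : unitInterval, pt u k j x (u j) = pt1 u k x := by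
    intro x; funext i
    by_cases hik : i = k
    · simp [pt, pt1, hik]
    · by_cases hij : i = j
      · subst hij; simp [pt, pt1, hik]
      · simp [pt, pt1, hik, hij]
  have e2 : ∀ x : unitInterval, C (pt u k j x 0) = 0 := by
    intro x
    refine zero_coord h (k := j) ?_
    simp [pt, hjk]
  rw [e1 s, e1 t, e2 s, e2 t] at key
  linarith

lemma lip1 (h : IsCopula C) (u : Cube d) (k : Fin d) {t s : unitInterval} (hts : t ≤ s) :
    C (pt1 u k s) - C (pt1 u k t) ≤ (s : ℝ) - t := by
  classical
  set q : Finset (Fin d) → unitInterval → Cube d :=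
    fun S x => fun i => if i = k then x else if i ∈ S then 1 else u i with hq
  have step : ∀ (j : Fin d) (S : Finset (Fin d)), j ∉ S → j ≠ k →
      C (q S s) - C (q S t) ≤ C (q (insert j S) s) - C (q (insert j S) t) := by
    intro j S hjS hjk
    have key := rect h (Ne.symm hjk) (q S t) (hts := hts)
      (hrr := (unitInterval.le_one' : u j ≤ 1))
    have e1 : ∀ x : unitInterval, pt (q S t) k j x (u j) = q S x := by
      intro x; funext i
      by_cases hik : i = k
      · simp [pt, hq, hik]
      · by_cases hij : i = j
        · subst hij; simp [pt, hq, hik, hjS]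
        · simp [pt, hq, hik, hij]
    have e2 : ∀ x : unitInterval, pt (q S t) k j x 1 = q (insert j S) x := by
      intro x; funext i
      by_cases hik : i = k
      · simp [pt, hq, hik]
      · by_cases hij : i = j
        · subst hij; simp [pt, hq, hik]
        · simp [pt, hq, hik, hij, Finset.mem_insert]
    rw [e1 s, e1 t, e2 s, e2 t] at key
    linarith
  have main : ∀ S : Finset (Fin d), k ∉ S →
      C (pt1 u k s) - C (pt1 u k t) ≤ C (q S s) - C (q S t) := by
    intro S
    induction S using Finset.induction_on with
    | empty =>
      intro _
      have he : ∀ x, q ∅ x = pt1 u k x := by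
        intro x; funext i; simp [hq, pt1]
      rw [he s, he t]
    | @insert j S hjS ih =>
      intro hk
      have hjk : j ≠ k := fun he => hk (by rw [he] at *; exact Finset.mem_insert_self _ _)
      have hkS : k ∉ S := fun hkS => hk (Finset.mem_insert_of_mem hkS)
      exact le_trans (ih hkS) (step j S hjS hjk)
  have hfin := main (Finset.univ.erase k) (Finset.notMem_erase k _)
  have hqe : ∀ x : unitInterval, C (q (Finset.univ.erase k) x) = (x : ℝ) := by
    intro x
    have h1 : ∀ j, j ≠ k → (q (Finset.univ.erase k) x) j = 1 := by
      intro j hjk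
      simp [hq, hjk, Finset.mem_erase]
    have h2 := margin h h1
    have h3 : (q (Finset.univ.erase k) x) k = x := by simp [hq]
    rw [h2, h3]
  rw [hqe s, hqe t] at hfin
  exact hfin

lemma bounds (hd : 2 ≤ d) (h : IsCopula C) (u : Cube d) : C u ∈ Set.Icc (0:ℝ) 1 := by
  have hk0 : (0:ℕ) < d := by omega
  set k : Fin d := ⟨0, hk0⟩
  have hu : pt1 u k (u k) = u := by
    funext i
    by_cases hik : i = k
    · subst hik; simp [pt1]
    · simp [pt1, hik]
  have h0 : C (pt1 u k 0) = 0 := zero_coord h (k := k) (by simp [pt1])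
  have hle : (0:unitInterval) ≤ u k := unitInterval.nonneg'
  constructor
  · have := mono hd h u k hle
    rw [hu, h0] at this; exact this
  · have h1 := lip1 h u k hle
    rw [hu, h0] at h1
    have h2 : (u k : ℝ) ≤ 1 := (u k).2.2
    have h3 : ((0:unitInterval) : ℝ) = 0 := rfl
    rw [h3] at h1
    linarith

lemma lip1' (hd : 2 ≤ d) (h : IsCopula C) (u : Cube d) (k : Fin d) (x y : unitInterval) :
    |C (pt1 u k x) - C (pt1 u k y)| ≤ |(x:ℝ) - y| := by
  have main : ∀ a b : unitInterval, b ≤ a → |C (pt1 u k a) - C (pt1 u k b)| ≤ |(a:ℝ) - b| := by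
    intro a b hba
    have h1 := mono hd h u k hba
    have h2 := lip1 h u k hba
    have h3 : (b:ℝ) ≤ a := hba
    rw [abs_of_nonneg (by linarith), abs_of_nonneg (by linarith)]
    exact h2
  rcases le_total y x with hxy | hxy
  · exact main x y hxy
  · rw [abs_sub_comm, abs_sub_comm (x:ℝ)]
    exact main y x hxy

lemma lipschitz (hd : 2 ≤ d) (h : IsCopula C) (u v : Cube d) :
    |C u - C v| ≤ ∑ k, |(u k : ℝ) - v k| := by
  classical
  have main : ∀ S : Finset (Fin d), |C (etaK S u v) - C u| ≤ ∑ k ∈ S, |(v k : ℝ) - u k| := by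
    intro S
    induction S using Finset.induction_on with
    | empty =>
      have he : etaK ∅ u v = u := by funext i; simp [etaK]
      simp [he]
    | @insert j S hjS ih =>
      have h1 : etaK (insert j S) u v = pt1 (etaK S u v) j (v j) := by
        funext i
        by_cases hij : i = j
        · subst hij; simp [etaK, pt1]
        · simp [etaK, pt1, hij, Finset.mem_insert]
      have h2 : etaK S u v = pt1 (etaK S u v) j (u j) := by
        funext i
        by_cases hij : i = j
        · subst hij; simp [etaK, pt1, hjS]
        · simp [etaK, pt1, hij]
      have h3 := lip1' hd h (etaK S u v) j (v j) (u j)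
      rw [← h1, ← h2] at h3
      calc |C (etaK (insert j S) u v) - C u|
          ≤ |C (etaK (insert j S) u v) - C (etaK S u v)| + |C (etaK S u v) - C u| :=
            abs_sub_le _ _ _
        _ ≤ |(v j : ℝ) - u j| + ∑ k ∈ S, |(v k : ℝ) - u k| := add_le_add h3 ih
        _ = ∑ k ∈ insert j S, |(v k : ℝ) - u k| := by rw [Finset.sum_insert hjS]
  have h4 := main Finset.univ
  have he : etaK Finset.univ u v = v := by funext i; simp [etaK]
  rw [he] at h4
  calc |C u - C v| = |C v - C u| := abs_sub_comm _ _
    _ ≤ ∑ k, |(v k : ℝ) - u k| := h4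
    _ = ∑ k, |(u k : ℝ) - v k| := Finset.sum_congr rfl fun k _ => abs_sub_comm _ _

lemma indep_isCopula : IsCopula (fun u : Cube d => ∏ k, (u k : ℝ)) := by
  classical
  refine ⟨?_, ?_, ?_⟩
  · intro u v huv
    have hkey : ∑ K : Finset (Fin d), (-1:ℝ) ^ (d - K.card) * ∏ k, ((etaK K u v k : ℝ))
        = ∏ k, ((v k : ℝ) - u k) := by
      rw [Finset.prod_sub (fun k => (v k : ℝ)) (fun k => (u k : ℝ)) Finset.univ]
      rw [← Finset.powerset_univ]
      refine Finset.sum_nbij' (fun K => Finset.univ \ K) (fun K => Finset.univ \ K)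
        ?_ ?_ ?_ ?_ ?_
      · intro K _; exact Finset.mem_powerset.mpr Finset.sdiff_subset
      · intro K _; exact Finset.mem_univ _
      · intro K _; simp
      · intro K _; simp
      · intro K _
        have hc : (Finset.univ \ K).card = d - K.card := by
          rw [Finset.card_sdiff_of_subset (Finset.subset_univ _), Finset.card_univ, Fintype.card_fin]
        have hdd : Finset.univ \ (Finset.univ \ K) = K := by simp
        rw [hc, hdd]
        have hprod : ∏ k, ((etaK K u v k : ℝ))
            = (∏ i ∈ K, (v i : ℝ)) * ∏ i ∈ Finset.univ \ K, (u i : ℝ) := by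
          have h1 : ∀ k, ((etaK K u v k : ℝ)) = if k ∈ K then (v k : ℝ) else (u k : ℝ) := by
            intro k; simp only [etaK]; split <;> rfl
          have h2 : Finset.univ.filter (fun i => i ∈ K) = K := by ext i; simp
          have h3 : Finset.univ.filter (fun i => i ∉ K) = Finset.univ \ K := by ext i; simp
          rw [Finset.prod_congr rfl fun k _ => h1 k, Finset.prod_ite, h2, h3]
        rw [hprod]
        ring
    simp only []
    rw [hkey]
    exact Finset.prod_nonneg fun k _ => sub_nonneg.mpr (huv k)
  · intro k u
    refine Finset.prod_eq_zero (Finset.mem_univ k) ?_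
    simp [etaK]
  · intro k u
    refine Finset.prod_eq_single_of_mem k (Finset.mem_univ k) ?_ |>.trans ?_
    · intro b _ hbk
      simp [etaK, hbk]
    · simp [etaK]

lemma isClosed_copulas : IsClosed {C : Cube d → ℝ | IsCopula C} := by
  classical
  have h1 : IsClosed {C : Cube d → ℝ | ∀ u v : Cube d, u ≤ v →
      0 ≤ ∑ K : Finset (Fin d), (-1:ℝ) ^ (d - K.card) * C (etaK K u v)} := by
    rw [Set.setOf_forall]
    refine isClosed_iInter fun u => ?_
    rw [Set.setOf_forall]
    refine isClosed_iInter fun v => ?_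
    by_cases huv : u ≤ v
    · simp only [huv, true_implies]
      exact isClosed_le continuous_const
        (continuous_finset_sum _ fun K _ => continuous_const.mul (continuous_apply (etaK K u v)))
    · simp only [huv, false_implies, Set.setOf_true]
      exact isClosed_univ
  have h2 : IsClosed {C : Cube d → ℝ | ∀ k : Fin d, ∀ u : Cube d, C (etaK {k} u 0) = 0} := by
    rw [Set.setOf_forall]
    refine isClosed_iInter fun k => ?_
    rw [Set.setOf_forall]
    refine isClosed_iInter fun u => ?_
    exact isClosed_eq (continuous_apply _) continuous_const
  have h3 : IsClosed {C : Cube d → ℝ | ∀ k : Fin d, ∀ u : Cube d, C (etaK {k} 1 u) = (u k : ℝ)} := by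
    rw [Set.setOf_forall]
    refine isClosed_iInter fun k => ?_
    rw [Set.setOf_forall]
    refine isClosed_iInter fun u => ?_
    exact isClosed_eq (continuous_apply _) continuous_const
  have : {C : Cube d → ℝ | IsCopula C}
      = {C | ∀ u v : Cube d, u ≤ v →
          0 ≤ ∑ K : Finset (Fin d), (-1:ℝ) ^ (d - K.card) * C (etaK K u v)}
        ∩ ({C | ∀ k : Fin d, ∀ u : Cube d, C (etaK {k} u 0) = 0}
          ∩ {C | ∀ k : Fin d, ∀ u : Cube d, C (etaK {k} 1 u) = (u k : ℝ)}) := rfl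
  rw [this]
  exact h1.inter (h2.inter h3)

lemma isCompact_copulas (hd : 2 ≤ d) :
    IsCompact (UniformFun.ofFun '' {C : Cube d → ℝ | IsCopula C} :
      Set (UniformFun (Cube d) ℝ)) := by
  set T : Set (Cube d → ℝ) := {C | IsCopula C} with hT
  have hTcpt : IsCompact T := by
    refine IsCompact.of_isClosed_subset
      (isCompact_univ_pi fun _ : Cube d => isCompact_Icc (a := (0:ℝ)) (b := 1))
      isClosed_copulas ?_
    intro C hC u _
    exact bounds hd hC u
  haveI : CompactSpace T := isCompact_iff_compactSpace.mp hTcpt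
  have hLip : ∀ (C : T) (u v : Cube d), dist (C.1 u) (C.1 v) ≤ d * dist u v := by
    rintro ⟨C, hC⟩ u v
    have h1 := lipschitz hd hC u v
    rw [Real.dist_eq]
    refine h1.trans ?_
    have h2 : ∀ k, |(u k : ℝ) - (v k : ℝ)| ≤ dist u v := by
      intro k
      have := dist_le_pi_dist u v k
      rwa [Subtype.dist_eq, Real.dist_eq] at this
    calc ∑ k, |(u k : ℝ) - v k| ≤ ∑ _k : Fin d, dist u v :=
          Finset.sum_le_sum fun k _ => h2 k
      _ = d * dist u v := by
          rw [Finset.sum_const, Finset.card_univ, Fintype.card_fin, nsmul_eq_mul]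
  have heq : Equicontinuous (fun C : T => (C.1 : Cube d → ℝ)) := by
    refine UniformEquicontinuous.equicontinuous ?_
    refine Metric.uniformEquicontinuous_of_continuity_modulus (fun t => d * t) ?_ _ ?_
    · have : Filter.Tendsto (fun t : ℝ => (d : ℝ) * t) (nhds 0) (nhds ((d : ℝ) * 0)) :=
        (continuous_const.mul continuous_id).tendsto 0
      simpa using this
    · intro x y i
      exact hLip i x y
  have hind : Topology.IsInducing (UniformFun.ofFun ∘ (fun C : T => (C.1 : Cube d → ℝ))) :=
    heq.inducing_uniformFun_iff_pi.mpr Topology.IsInducing.subtypeVal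
  have hrange : Set.range (UniformFun.ofFun ∘ (fun C : T => (C.1 : Cube d → ℝ)))
      = UniformFun.ofFun '' T := by
    rw [Set.range_comp, Subtype.range_coe]
  rw [← hrange]
  exact isCompact_range hind.continuous

end CopulaAux

lemma CopulaAux.key {d : ℕ} (κ : (Cube d → ℝ) → ℝ)
    (hκc : ContinuousFunctional κ) (hκs : StrictConcPreserving κ)
    (𝒟 : Set (Cube d → ℝ))
    (h𝒟cop : ∀ C ∈ 𝒟, IsCopula C) (h𝒟ne : 𝒟.Nonempty)
    (h𝒟cpt : IsCompact (UniformFun.ofFun '' 𝒟 : Set (UniformFun (Cube d) ℝ))) :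
    (MinSet κ 𝒟).Nonempty ∧ ∀ C ∈ MinSet κ 𝒟, ∀ E ∈ 𝒟, ConcLE E C → E = C := by
  classical
  haveI hcg : Filter.IsCountablyGenerated (uniformity (UniformFun (Cube d) ℝ)) := by
    obtain ⟨B, hB⟩ := (uniformity ℝ).exists_antitone_basis
    exact (UniformFun.hasBasis_uniformity_of_basis (Cube d) ℝ hB.toHasBasis).isCountablyGenerated
  set S : Set (UniformFun (Cube d) ℝ) := UniformFun.ofFun '' 𝒟 with hS
  haveI : CompactSpace S := isCompact_iff_compactSpace.mp h𝒟cpt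
  haveI : Nonempty S := by
    obtain ⟨D, hD⟩ := h𝒟ne
    exact ⟨⟨UniformFun.ofFun D, ⟨D, hD, rfl⟩⟩⟩
  have hmem : ∀ x : S, UniformFun.toFun x.1 ∈ 𝒟 := by
    rintro ⟨x, D, hD, rfl⟩
    simpa using hD
  have hFc : Continuous (fun x : S => κ (UniformFun.toFun x.1)) := by
    refine SeqContinuous.continuous ?_
    intro xs x hxs
    have h1 : Filter.Tendsto (fun n => (xs n).1) Filter.atTop (nhds x.1) :=
      (continuous_subtype_val.tendsto x).comp hxs
    rw [UniformFun.tendsto_iff_tendstoUniformly] at h1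
    exact hκc _ _ (fun n => h𝒟cop _ (hmem (xs n))) (h𝒟cop _ (hmem x)) h1
  obtain ⟨x0, -, hx0⟩ := isCompact_univ.exists_isMinOn Set.univ_nonempty hFc.continuousOn
  set D0 : Cube d → ℝ := UniformFun.toFun x0.1 with hD0
  have hD0mem : D0 ∈ 𝒟 := hmem x0
  have hmin : ∀ E ∈ 𝒟, κ D0 ≤ κ E := by
    intro E hE
    have := (isMinOn_iff.mp hx0) (⟨UniformFun.ofFun E, ⟨E, hE, rfl⟩⟩ : S) (Set.mem_univ _)
    simpa using this
  have hbdd : BddBelow (κ '' 𝒟) := ⟨κ D0, by rintro y ⟨E, hE, rfl⟩; exact hmin E hE⟩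
  have hInf : κ D0 = sInf (κ '' 𝒟) :=
    le_antisymm (le_csInf (h𝒟ne.image κ) (by rintro y ⟨E, hE, rfl⟩; exact hmin E hE))
      (csInf_le hbdd ⟨D0, hD0mem, rfl⟩)
  refine ⟨⟨D0, hD0mem, hInf⟩, ?_⟩
  rintro Cm ⟨hCm, hCinf⟩ E hE hEC
  by_contra hne
  have hlt : κ E < κ Cm := hκs.2 E Cm (h𝒟cop E hE) (h𝒟cop Cm hCm) hEC hne
  have hle : κ Cm ≤ κ E := by
    rw [hCinf]
    exact csInf_le hbdd ⟨E, hE, rfl⟩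
  exact absurd hle (not_le.mpr hlt)


/-- For a continuous, strictly concordance order preserving functional, the set of
minimizers over any nonempty compact set of copulas is nonempty and consists only of
minimal elements; in particular its set of minimizers over all copulas is a nonempty set
of minimal copulas. -/
theorem stmt14 (d : ℕ) (hd : 2 ≤ d) (κ : (Cube d → ℝ) → ℝ)
    (hκc : ContinuousFunctional κ) (hκs : StrictConcPreserving κ)
    (𝒟 : Set (Cube d → ℝ))
    (h𝒟cop : ∀ C ∈ 𝒟, IsCopula C) (h𝒟ne : 𝒟.Nonempty)
    (h𝒟cpt : IsCompact (UniformFun.ofFun '' 𝒟 : Set (UniformFun (Cube d) ℝ))) :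
    ((MinSet κ 𝒟).Nonempty ∧ ∀ C ∈ MinSet κ 𝒟, ∀ E ∈ 𝒟, ConcLE E C → E = C) ∧
    ((MinSet κ {C : Cube d → ℝ | IsCopula C}).Nonempty ∧
      ∀ C ∈ MinSet κ {C : Cube d → ℝ | IsCopula C}, IsMinimalCopula C) := by
  have h1 := CopulaAux.key κ hκc hκs 𝒟 h𝒟cop h𝒟ne h𝒟cpt
  have h2 := CopulaAux.key κ hκc hκs {C : Cube d → ℝ | IsCopula C} (fun C hC => hC)
    ⟨fun u => ∏ k, ((u k : ℝ)), by exact CopulaAux.indep_isCopula⟩ (CopulaAux.isCompact_copulas hd)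
  exact ⟨h1, h2.1, fun C hC => ⟨hC.1, fun D hD hDC => h2.2 C hC D hD hDC⟩⟩
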